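/- Suppose α₁α₂ > β₁β₂. Then almost surely on the event {τ = ∞}, S_n/n → ρ̃ as n → ∞ (i.e. the event {τ = ∞} ∖ {lim_{n→∞} S_n/n = ρ̃} has probability zero). -/

import Mathlib

open MeasureTheory Filter Finset Topology
open scoped NNReal ENNReal

lemma sum_inv_sq_le (n : ℕ) : ∑ k ∈ range n, (((k : ℝ) + 1)⁻¹) ^ 2 ≤ 2 := by
  have h : ∀ n : ℕ, ∑ k ∈ range n, (((k : ℝ) + 1)⁻¹) ^ 2 ≤ 2 - 2 / (n + 1) := by
    intro n
    induction n with
    | zero => norm_num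
    | succ n ih =>
      rw [Finset.sum_range_succ]
      have h1 : (0:ℝ) < (n:ℝ) + 1 := by positivity
      have h2 : (0:ℝ) < (n:ℝ) + 2 := by positivity
      have key : (((n:ℝ) + 1)⁻¹) ^ 2 ≤ 2 / ((n:ℝ) + 1) - 2 / ((n:ℝ) + 2) := by
        rw [show 2 / ((n:ℝ) + 1) - 2 / ((n:ℝ) + 2) = 2 / (((n:ℝ)+1) * ((n:ℝ)+2)) by
          field_simp; ring]
        rw [inv_eq_one_div, div_pow, div_le_div_iff₀ (by positivity) (by positivity)]
        nlinarith [sq_nonneg ((n:ℝ))]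
      push_cast
      rw [show ((n:ℝ) + 1 + 1) = (n:ℝ) + 2 from by ring]
      linarith
  have := h n
  have h1 : (0:ℝ) ≤ 2 / ((n:ℝ) + 1) := by positivity
  linarith

lemma kronecker_aux {a : ℕ → ℝ} {c : ℝ}
    (h : Tendsto (fun n => ∑ k ∈ range n, a k / ((k : ℝ) + 1)) atTop (𝓝 c)) :
    Tendsto (fun n => (∑ k ∈ range n, a k) / (n : ℝ)) atTop (𝓝 0) := by
  set s : ℕ → ℝ := fun n => ∑ k ∈ range n, a k / ((k : ℝ) + 1) with hs
  have hid : ∀ n, ∑ k ∈ range n, a k = (n : ℝ) * s n - ∑ k ∈ range n, s k := by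
    intro n
    have hterm : ∀ k, a k = ((((k+1 : ℕ)) : ℝ) * s (k + 1) - (k : ℝ) * s k) - s k := by
      intro k
      have hsk : s (k + 1) = s k + a k / ((k : ℝ) + 1) := by
        simp [hs, Finset.sum_range_succ]
      have hk : ((k : ℝ) + 1) ≠ 0 := by positivity
      rw [hsk]
      push_cast
      field_simp
      ring
    calc ∑ k ∈ range n, a k
        = ∑ k ∈ range n, (((((k+1 : ℕ)) : ℝ) * s (k + 1) - (k : ℝ) * s k) - s k) := by
          exact Finset.sum_congr rfl fun k _ => hterm k
      _ = (∑ k ∈ range n, ((((k+1 : ℕ)) : ℝ) * s (k + 1) - (k : ℝ) * s k))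
          - ∑ k ∈ range n, s k := by rw [Finset.sum_sub_distrib]
      _ = (n : ℝ) * s n - ∑ k ∈ range n, s k := by
          rw [Finset.sum_range_sub (fun k => (k : ℝ) * s k)]
          norm_num
  have hces : Tendsto (fun n : ℕ => (n : ℝ)⁻¹ * ∑ k ∈ range n, s k) atTop (𝓝 c) := by
    have := h.cesaro
    simpa [smul_eq_mul] using this
  have hmain : Tendsto (fun n : ℕ => s n - (n : ℝ)⁻¹ * ∑ k ∈ range n, s k) atTop (𝓝 (c - c)) :=
    h.sub hces
  rw [sub_self] at hmain
  refine hmain.congr' ?_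
  filter_upwards [eventually_ge_atTop 1] with n hn
  have hn' : (n : ℝ) ≠ 0 := by
    simp only [ne_eq, Nat.cast_eq_zero]; omega
  rw [hid n]
  field_simp

lemma lln_aux {Ω : Type*} {m0 : MeasurableSpace Ω} (P : Measure Ω) [IsProbabilityMeasure P]
    (ℱ : Filtration ℕ m0) (d : ℕ → Ω → ℝ) (C : ℝ) (hC : 0 ≤ C)
    (hmeas : ∀ n, StronglyMeasurable[ℱ (n + 1)] (d n))
    (hbdd : ∀ n ω, |d n ω| ≤ C)
    (hcond : ∀ n, P[d n | ℱ n] =ᵐ[P] 0) :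
    ∀ᵐ ω ∂P, Tendsto (fun n => (∑ k ∈ range n, d k ω) / (n : ℝ)) atTop (𝓝 0) := by
  -- the weighted martingale
  set X : ℕ → Ω → ℝ := fun n ω => ∑ k ∈ range n, d k ω / ((k : ℝ) + 1) with hX
  have hdm0 : ∀ k, StronglyMeasurable (d k) :=
    fun k => (hmeas k).mono (ℱ.le (k + 1))
  have hd_int : ∀ k, Integrable (d k) P := by
    intro k
    refine Integrable.mono' (integrable_const C) (hdm0 k).aestronglyMeasurable ?_
    exact Eventually.of_forall fun ω => (by simpa using hbdd k ω)
  have he_int : ∀ k, Integrable (fun ω => d k ω / ((k : ℝ) + 1)) P := by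
    intro k
    simpa [div_eq_inv_mul] using (hd_int k).const_mul (((k : ℝ) + 1)⁻¹)
  have hXmeas : ∀ n, StronglyMeasurable[ℱ n] (X n) := by
    intro n
    apply Finset.stronglyMeasurable_fun_sum
    intro k hk
    have hle : ℱ (k + 1) ≤ ℱ n := ℱ.mono (Finset.mem_range.mp hk)
    have : StronglyMeasurable[ℱ n] fun ω => d k ω * (((k : ℝ) + 1)⁻¹) :=
      ((hmeas k).mono hle).mul_const _
    simpa [div_eq_mul_inv] using this
  have hXbd : ∀ n ω, |X n ω| ≤ n * C := by
    intro n ω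
    calc |X n ω| ≤ ∑ k ∈ range n, |d k ω / ((k : ℝ) + 1)| := Finset.abs_sum_le_sum_abs _ _
      _ ≤ ∑ k ∈ range n, C := by
          refine Finset.sum_le_sum fun k _ => ?_
          rw [abs_div, abs_of_pos (show (0:ℝ) < (k:ℝ) + 1 by positivity)]
          have h1 : (1:ℝ) ≤ (k : ℝ) + 1 := by linarith [Nat.cast_nonneg (α := ℝ) k]
          calc |d k ω| / ((k : ℝ) + 1) ≤ |d k ω| := div_le_self (abs_nonneg _) h1
            _ ≤ C := hbdd k ω
      _ = n * C := by simp [mul_comm]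
  have hX_int : ∀ n, Integrable (X n) P := by
    intro n
    refine Integrable.mono' (integrable_const ((n : ℝ) * C))
      ((hXmeas n).mono (ℱ.le n)).aestronglyMeasurable ?_
    exact Eventually.of_forall fun ω => by simpa using hXbd n ω
  -- martingale property
  have hXadd : ∀ n, X (n + 1) = X n + (((n : ℝ) + 1)⁻¹) • d n := by
    intro n
    funext ω
    simp [hX, Finset.sum_range_succ, div_eq_inv_mul, mul_comm]
  have hmart : Martingale X ℱ P := by
    refine martingale_nat (fun n => hXmeas n) hX_int ?_
    intro n
    have h1 : P[X (n + 1)|ℱ n] =ᵐ[P] P[X n|ℱ n] + P[(((n : ℝ) + 1)⁻¹) • d n|ℱ n] := by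
      rw [hXadd n]
      exact condExp_add (hX_int n) ((hd_int n).smul _) (ℱ n)
    have h2 : P[X n|ℱ n] = X n := condExp_of_stronglyMeasurable (ℱ.le n) (hXmeas n) (hX_int n)
    have h3 : P[(((n : ℝ) + 1)⁻¹) • d n|ℱ n] =ᵐ[P] (0 : Ω → ℝ) := by
      refine (condExp_smul (((n : ℝ) + 1)⁻¹) (d n) (ℱ n)).trans ?_
      filter_upwards [hcond n] with ω hω
      simp [hω]
    symm
    calc P[X (n + 1)|ℱ n] =ᵐ[P] P[X n|ℱ n] + P[(((n : ℝ) + 1)⁻¹) • d n|ℱ n] := h1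
      _ =ᵐ[P] X n + (0 : Ω → ℝ) := by
          rw [h2]; exact EventuallyEq.add EventuallyEq.rfl h3
      _ = X n := by simp
  -- second moment bound
  have hXsq_int : ∀ n, Integrable (fun ω => X n ω ^ 2) P := by
    intro n
    have hm : StronglyMeasurable (fun ω => X n ω ^ 2) := by
      have := ((hXmeas n).mono (ℱ.le n)).mul ((hXmeas n).mono (ℱ.le n))
      simpa [sq, Pi.mul_def] using this
    refine Integrable.mono' (integrable_const (((n : ℝ) * C) ^ 2)) hm.aestronglyMeasurable ?_
    refine Eventually.of_forall fun ω => ?_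
    have h1 := hXbd n ω
    have h2 : (0:ℝ) ≤ (n : ℝ) * C := by positivity
    rw [Real.norm_eq_abs, abs_pow]
    exact pow_le_pow_left₀ (abs_nonneg _) h1 2
  have hesq_int : ∀ n, Integrable (fun ω => (d n ω / ((n : ℝ) + 1)) ^ 2) P := by
    intro n
    have hm : StronglyMeasurable (fun ω => (d n ω / ((n : ℝ) + 1)) ^ 2) := by
      have := ((hdm0 n).mul_const (((n : ℝ) + 1)⁻¹)).mul ((hdm0 n).mul_const (((n : ℝ) + 1)⁻¹))
      simpa [sq, div_eq_mul_inv, Pi.mul_def] using this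
    refine Integrable.mono' (integrable_const (C ^ 2)) hm.aestronglyMeasurable ?_
    refine Eventually.of_forall fun ω => ?_
    rw [Real.norm_eq_abs, abs_pow]
    refine pow_le_pow_left₀ (abs_nonneg _) ?_ 2
    rw [abs_div, abs_of_pos (show (0:ℝ) < (n:ℝ) + 1 by positivity)]
    calc |d n ω| / ((n : ℝ) + 1) ≤ |d n ω| :=
          div_le_self (abs_nonneg _) (by linarith [Nat.cast_nonneg (α := ℝ) n])
      _ ≤ C := hbdd n ω
  have hprod_int : ∀ n, Integrable (fun ω => X n ω * (d n ω / ((n : ℝ) + 1))) P := by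
    intro n
    have hm : StronglyMeasurable (fun ω => X n ω * (d n ω / ((n : ℝ) + 1))) := by
      have := ((hXmeas n).mono (ℱ.le n)).mul ((hdm0 n).mul_const (((n : ℝ) + 1)⁻¹))
      simpa [div_eq_mul_inv, Pi.mul_def] using this
    refine Integrable.mono' (integrable_const ((n : ℝ) * C * C)) hm.aestronglyMeasurable ?_
    refine Eventually.of_forall fun ω => ?_
    rw [Real.norm_eq_abs, abs_mul]
    have h1 : |d n ω / ((n : ℝ) + 1)| ≤ C := by
      rw [abs_div, abs_of_pos (show (0:ℝ) < (n:ℝ) + 1 by positivity)]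
      calc |d n ω| / ((n : ℝ) + 1) ≤ |d n ω| :=
            div_le_self (abs_nonneg _) (by linarith [Nat.cast_nonneg (α := ℝ) n])
        _ ≤ C := hbdd n ω
    exact mul_le_mul (hXbd n ω) h1 (abs_nonneg _) (by positivity)
  -- the cross term vanishes
  have hcross : ∀ n, ∫ ω, X n ω * (d n ω / ((n : ℝ) + 1)) ∂P = 0 := by
    intro n
    have he : P[fun ω => d n ω / ((n : ℝ) + 1)|ℱ n] =ᵐ[P] (0 : Ω → ℝ) := by
      have h0 : (fun ω => d n ω / ((n : ℝ) + 1)) = (((n : ℝ) + 1)⁻¹) • d n := by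
        funext ω; simp [div_eq_inv_mul, mul_comm]
      rw [h0]
      refine (condExp_smul (((n : ℝ) + 1)⁻¹) (d n) (ℱ n)).trans ?_
      filter_upwards [hcond n] with ω hω
      simp [hω]
    have hpull : P[fun ω => X n ω * (d n ω / ((n : ℝ) + 1))|ℱ n]
        =ᵐ[P] fun ω => X n ω * (P[fun ω' => d n ω' / ((n : ℝ) + 1)|ℱ n]) ω := by
      have := condExp_mul_of_stronglyMeasurable_left (μ := P) (m := ℱ n) (hXmeas n)
        (hprod_int n) (he_int n)
      exact this
    have hzero : P[fun ω => X n ω * (d n ω / ((n : ℝ) + 1))|ℱ n] =ᵐ[P] (0 : Ω → ℝ) := by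
      refine hpull.trans ?_
      filter_upwards [he] with ω hω
      simp [hω]
    calc ∫ ω, X n ω * (d n ω / ((n : ℝ) + 1)) ∂P
        = ∫ ω, (P[fun ω' => X n ω' * (d n ω' / ((n : ℝ) + 1))|ℱ n]) ω ∂P :=
          (integral_condExp (ℱ.le n)).symm
      _ = 0 := by rw [integral_eq_zero_of_ae hzero]
  -- second moment recursion
  have hsq : ∀ n, ∫ ω, X n ω ^ 2 ∂P ≤ C ^ 2 * ∑ k ∈ range n, (((k : ℝ) + 1)⁻¹) ^ 2 := by
    intro n
    induction n with
    | zero => simp [hX]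
    | succ n ih =>
      have hXs : ∀ ω, X (n + 1) ω ^ 2
          = X n ω ^ 2 + 2 * (X n ω * (d n ω / ((n : ℝ) + 1))) + (d n ω / ((n : ℝ) + 1)) ^ 2 := by
        intro ω
        have : X (n + 1) ω = X n ω + d n ω / ((n : ℝ) + 1) := by
          simp [hX, Finset.sum_range_succ]
        rw [this]; ring
      have hint2 : ∫ ω, X (n+1) ω ^ 2 ∂P
          = ∫ ω, X n ω ^ 2 ∂P + 2 * ∫ ω, X n ω * (d n ω / ((n : ℝ) + 1)) ∂P
            + ∫ ω, (d n ω / ((n : ℝ) + 1)) ^ 2 ∂P := by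
        rw [show (fun ω => X (n+1) ω ^ 2)
            = fun ω => (X n ω ^ 2 + 2 * (X n ω * (d n ω / ((n : ℝ) + 1)))
              + (d n ω / ((n : ℝ) + 1)) ^ 2) from funext hXs]
        have hb2 : Integrable (fun ω => 2 * (X n ω * (d n ω / ((n : ℝ) + 1)))) P :=
          (hprod_int n).const_mul 2
        have hab : Integrable
            (fun ω => X n ω ^ 2 + 2 * (X n ω * (d n ω / ((n : ℝ) + 1)))) P :=
          (hXsq_int n).add hb2
        rw [integral_add hab (hesq_int n), integral_add (hXsq_int n) hb2, integral_const_mul]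
      have hesq : ∫ ω, (d n ω / ((n : ℝ) + 1)) ^ 2 ∂P ≤ C ^ 2 * (((n : ℝ) + 1)⁻¹) ^ 2 := by
        have hb : ∀ ω, (d n ω / ((n : ℝ) + 1)) ^ 2 ≤ C ^ 2 * (((n : ℝ) + 1)⁻¹) ^ 2 := by
          intro ω
          have h1 : (d n ω / ((n : ℝ) + 1)) ^ 2 = d n ω ^ 2 * (((n : ℝ) + 1)⁻¹) ^ 2 := by
            rw [div_eq_mul_inv, mul_pow]
          have h2 : d n ω ^ 2 ≤ C ^ 2 := by
            calc d n ω ^ 2 = |d n ω| ^ 2 := (sq_abs _).symm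
              _ ≤ C ^ 2 := pow_le_pow_left₀ (abs_nonneg _) (hbdd n ω) 2
          rw [h1]
          exact mul_le_mul_of_nonneg_right h2 (sq_nonneg _)
        calc ∫ ω, (d n ω / ((n : ℝ) + 1)) ^ 2 ∂P
            ≤ ∫ _ω, C ^ 2 * (((n : ℝ) + 1)⁻¹) ^ 2 ∂P :=
              integral_mono (hesq_int n) (integrable_const _) hb
          _ = C ^ 2 * (((n : ℝ) + 1)⁻¹) ^ 2 := by simp
      rw [Finset.sum_range_succ, mul_add]
      rw [hint2, hcross n]
      linarith
  -- L¹ bound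
  have hL1 : ∀ n, ∫ ω, |X n ω| ∂P ≤ (2 * C ^ 2 + 1) / 2 := by
    intro n
    have hb : ∀ ω, |X n ω| ≤ (X n ω ^ 2 + 1) / 2 := by
      intro ω
      nlinarith [sq_nonneg (|X n ω| - 1), sq_abs (X n ω), abs_nonneg (X n ω)]
    have h1 : ∫ ω, |X n ω| ∂P ≤ ∫ ω, (X n ω ^ 2 + 1) / 2 ∂P := by
      refine integral_mono (hX_int n).abs ?_ hb
      exact (((hXsq_int n).add (integrable_const 1)).div_const 2)
    have h2 : ∫ ω, (X n ω ^ 2 + 1) / 2 ∂P = (∫ ω, X n ω ^ 2 ∂P + 1) / 2 := by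
      rw [integral_div, integral_add (hXsq_int n) (integrable_const 1)]
      simp
    have h3 : ∫ ω, X n ω ^ 2 ∂P ≤ 2 * C ^ 2 := by
      calc ∫ ω, X n ω ^ 2 ∂P ≤ C ^ 2 * ∑ k ∈ range n, (((k : ℝ) + 1)⁻¹) ^ 2 := hsq n
        _ ≤ C ^ 2 * 2 := mul_le_mul_of_nonneg_left (sum_inv_sq_le n) (sq_nonneg _)
        _ = 2 * C ^ 2 := by ring
    rw [h2] at h1
    linarith
  -- eLpNorm bound and a.e. convergence
  set R : ℝ≥0 := ((2 * C ^ 2 + 1) / 2).toNNReal with hR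
  have hbound : ∀ n, eLpNorm (X n) 1 P ≤ (R : ENNReal) := by
    intro n
    rw [eLpNorm_one_eq_lintegral_enorm,
      ← ofReal_integral_norm_eq_lintegral_enorm (hX_int n)]
    rw [hR, ENNReal.ofReal]
    refine ENNReal.coe_le_coe.mpr (Real.toNNReal_le_toNNReal ?_)
    simpa [Real.norm_eq_abs] using hL1 n
  have hconv := hmart.submartingale.exists_ae_tendsto_of_bdd hbound
  filter_upwards [hconv] with ω hω
  obtain ⟨c, hc⟩ := hω
  exact kronecker_aux (a := fun k => d k ω) hc

set_option maxHeartbeats 2000000 in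
/-- Proposition on the law of large numbers for `Sₙ`.
For the discrete-time competition process with linear interaction, if `α₁α₂ > β₁β₂`
then, almost surely on the event `{τ = ∞}` (the process never hits the coordinate axes),
`Sₙ/n → ρ̃ = α₁α₂ − β₁β₂` as `n → ∞`. -/
theorem stmt_6
    {Ω : Type*} {m0 : MeasurableSpace Ω} (P : Measure Ω) [IsProbabilityMeasure P]
    (ℱ : Filtration ℕ m0)
    (l₁ l₂ β₁ β₂ α₁ α₂ : ℝ)
    (hl₁ : 0 < l₁) (hl₂ : 0 < l₂) (hβ₁ : 0 < β₁) (hβ₂ : 0 < β₂)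
    (hα₁ : 0 ≤ α₁) (hα₂ : 0 ≤ α₂)
    (ζ₁ ζ₂ : ℕ → Ω → ℕ)
    (hζ₁meas : ∀ n, Measurable[ℱ n] (ζ₁ n)) (hζ₂meas : ∀ n, Measurable[ℱ n] (ζ₂ n))
    (x₀ y₀ : ℕ) (hinit : ∀ ω, ζ₁ 0 ω = x₀ ∧ ζ₂ 0 ω = y₀)
    (hstep : ∀ n, ∀ᵐ ω ∂P,
      (ζ₁ (n + 1) ω = ζ₁ n ω + 1 ∧ ζ₂ (n + 1) ω = ζ₂ n ω) ∨
      (ζ₁ (n + 1) ω = ζ₁ n ω ∧ ζ₂ (n + 1) ω = ζ₂ n ω + 1) ∨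
      (ζ₁ (n + 1) ω + 1 = ζ₁ n ω ∧ ζ₂ (n + 1) ω = ζ₂ n ω) ∨
      (ζ₁ (n + 1) ω = ζ₁ n ω ∧ ζ₂ (n + 1) ω + 1 = ζ₂ n ω))
    (W : ℕ → Ω → ℝ)
    (hW : ∀ n ω, W n ω =
      (l₁ + α₁ * (ζ₁ n ω : ℝ)) + (l₂ + α₂ * (ζ₂ n ω : ℝ)) +
      (if 1 ≤ ζ₁ n ω then β₁ * (ζ₂ n ω : ℝ) else 0) +
      (if 1 ≤ ζ₂ n ω then β₂ * (ζ₁ n ω : ℝ) else 0))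
    (hright : ∀ n,
      P[({ω' | ζ₁ (n + 1) ω' = ζ₁ n ω' + 1 ∧ ζ₂ (n + 1) ω' = ζ₂ n ω'} : Set Ω).indicator
          (fun _ => (1 : ℝ)) | ℱ n]
        =ᵐ[P] fun ω => (l₁ + α₁ * (ζ₁ n ω : ℝ)) / W n ω)
    (hupp : ∀ n,
      P[({ω' | ζ₁ (n + 1) ω' = ζ₁ n ω' ∧ ζ₂ (n + 1) ω' = ζ₂ n ω' + 1} : Set Ω).indicator
          (fun _ => (1 : ℝ)) | ℱ n]
        =ᵐ[P] fun ω => (l₂ + α₂ * (ζ₂ n ω : ℝ)) / W n ω)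
    (hleft : ∀ n,
      P[({ω' | ζ₁ (n + 1) ω' + 1 = ζ₁ n ω' ∧ ζ₂ (n + 1) ω' = ζ₂ n ω'} : Set Ω).indicator
          (fun _ => (1 : ℝ)) | ℱ n]
        =ᵐ[P] fun ω => (if 1 ≤ ζ₁ n ω then β₁ * (ζ₂ n ω : ℝ) else 0) / W n ω)
    (hdownp : ∀ n,
      P[({ω' | ζ₁ (n + 1) ω' = ζ₁ n ω' ∧ ζ₂ (n + 1) ω' + 1 = ζ₂ n ω'} : Set Ω).indicator
          (fun _ => (1 : ℝ)) | ℱ n]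
        =ᵐ[P] fun ω => (if 1 ≤ ζ₂ n ω then β₂ * (ζ₁ n ω : ℝ) else 0) / W n ω)
    (hab : β₁ * β₂ < α₁ * α₂)
    (S : ℕ → Ω → ℝ)
    (hS : ∀ n ω, S n ω = (α₁ * α₂ + β₁ * β₂ + 2 * α₂ * β₂) * (ζ₁ n ω : ℝ) +
      (α₁ * α₂ + β₁ * β₂ + 2 * α₁ * β₁) * (ζ₂ n ω : ℝ)) :
    ∀ᵐ ω ∂P, (∀ n, ζ₁ n ω ≠ 0 ∧ ζ₂ n ω ≠ 0) →
      Tendsto (fun n : ℕ => S n ω / (n : ℝ)) atTop (nhds (α₁ * α₂ - β₁ * β₂)) := by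
  classical
  set A : ℝ := α₁ * α₂ + β₁ * β₂ + 2 * α₂ * β₂ with hA_def
  set B : ℝ := α₁ * α₂ + β₁ * β₂ + 2 * α₁ * β₁ with hB_def
  set ρ : ℝ := α₁ * α₂ - β₁ * β₂ with hρ_def
  have hββ : 0 < β₁ * β₂ := mul_pos hβ₁ hβ₂
  have hαα : 0 < α₁ * α₂ := lt_trans hββ hab
  have hA : 0 < A := by
    have : 0 ≤ 2 * α₂ * β₂ := by positivity
    simp only [hA_def]; linarith
  have hB : 0 < B := by
    have : 0 ≤ 2 * α₁ * β₁ := by positivity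
    simp only [hB_def]; linarith
  have hρ : 0 < ρ := by simp only [hρ_def]; linarith
  set c : ℝ := l₁ * (A - ρ) + l₂ * (B - ρ) with hc_def
  have hc : 0 < c := by
    have h1 : A - ρ = 2 * β₁ * β₂ + 2 * α₂ * β₂ := by
      simp only [hA_def, hρ_def]; ring
    have h2 : B - ρ = 2 * β₁ * β₂ + 2 * α₁ * β₁ := by
      simp only [hB_def, hρ_def]; ring
    have h3 : 0 < A - ρ := by rw [h1]; positivity
    have h4 : 0 < B - ρ := by rw [h2]; positivity
    simp only [hc_def]; positivity
  -- basic positivity of W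
  have hWpos : ∀ n ω, 0 < W n ω := by
    intro n ω
    rw [hW]
    have h1 : (0:ℝ) ≤ α₁ * (ζ₁ n ω : ℝ) := by positivity
    have h2 : (0:ℝ) ≤ α₂ * (ζ₂ n ω : ℝ) := by positivity
    have h3 : (0:ℝ) ≤ if 1 ≤ ζ₁ n ω then β₁ * (ζ₂ n ω : ℝ) else 0 := by
      split_ifs <;> positivity
    have h4 : (0:ℝ) ≤ if 1 ≤ ζ₂ n ω then β₂ * (ζ₁ n ω : ℝ) else 0 := by
      split_ifs <;> positivity
    linarith
  -- the four jump events
  set E₁ : ℕ → Set Ω := fun n =>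
    {ω' | ζ₁ (n + 1) ω' = ζ₁ n ω' + 1 ∧ ζ₂ (n + 1) ω' = ζ₂ n ω'} with hE₁_def
  set E₂ : ℕ → Set Ω := fun n =>
    {ω' | ζ₁ (n + 1) ω' = ζ₁ n ω' ∧ ζ₂ (n + 1) ω' = ζ₂ n ω' + 1} with hE₂_def
  set E₃ : ℕ → Set Ω := fun n =>
    {ω' | ζ₁ (n + 1) ω' + 1 = ζ₁ n ω' ∧ ζ₂ (n + 1) ω' = ζ₂ n ω'} with hE₃_def
  set E₄ : ℕ → Set Ω := fun n =>
    {ω' | ζ₁ (n + 1) ω' = ζ₁ n ω' ∧ ζ₂ (n + 1) ω' + 1 = ζ₂ n ω'} with hE₄_def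
  have hζ₁m : ∀ {k n : ℕ}, k ≤ n → Measurable[ℱ n] (ζ₁ k) :=
    fun h => (hζ₁meas _).mono (ℱ.mono h) le_rfl
  have hζ₂m : ∀ {k n : ℕ}, k ≤ n → Measurable[ℱ n] (ζ₂ k) :=
    fun h => (hζ₂meas _).mono (ℱ.mono h) le_rfl
  have hE₁m : ∀ n, MeasurableSet[ℱ (n + 1)] (E₁ n) := by
    intro n
    exact (measurableSet_eq_fun (hζ₁m le_rfl)
        ((hζ₁m (Nat.le_succ n)).add measurable_const)).inter
      (measurableSet_eq_fun (hζ₂m le_rfl) (hζ₂m (Nat.le_succ n)))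
  have hE₂m : ∀ n, MeasurableSet[ℱ (n + 1)] (E₂ n) := by
    intro n
    exact (measurableSet_eq_fun (hζ₁m le_rfl) (hζ₁m (Nat.le_succ n))).inter
      (measurableSet_eq_fun (hζ₂m le_rfl)
        ((hζ₂m (Nat.le_succ n)).add measurable_const))
  have hE₃m : ∀ n, MeasurableSet[ℱ (n + 1)] (E₃ n) := by
    intro n
    exact (measurableSet_eq_fun ((hζ₁m le_rfl).add measurable_const)
        (hζ₁m (Nat.le_succ n))).inter
      (measurableSet_eq_fun (hζ₂m le_rfl) (hζ₂m (Nat.le_succ n)))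
  have hE₄m : ∀ n, MeasurableSet[ℱ (n + 1)] (E₄ n) := by
    intro n
    exact (measurableSet_eq_fun (hζ₁m le_rfl) (hζ₁m (Nat.le_succ n))).inter
      (measurableSet_eq_fun ((hζ₂m le_rfl).add measurable_const)
        (hζ₂m (Nat.le_succ n)))
  -- the predictable compensator
  set g : ℕ → Ω → ℝ := fun n ω =>
    (A * (l₁ + α₁ * (ζ₁ n ω : ℝ)) + B * (l₂ + α₂ * (ζ₂ n ω : ℝ))
      - A * (if 1 ≤ ζ₁ n ω then β₁ * (ζ₂ n ω : ℝ) else 0)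
      - B * (if 1 ≤ ζ₂ n ω then β₂ * (ζ₁ n ω : ℝ) else 0)) / W n ω with hg_def
  have hgb : ∀ n ω, |g n ω| ≤ A + B := by
    intro n ω
    set x : ℝ := (ζ₁ n ω : ℝ) with hx
    set y : ℝ := (ζ₂ n ω : ℝ) with hy
    have hx0 : 0 ≤ x := Nat.cast_nonneg _
    have hy0 : 0 ≤ y := Nat.cast_nonneg _
    have ht₁ : 0 ≤ l₁ + α₁ * x := by positivity
    have ht₂ : 0 ≤ l₂ + α₂ * y := by positivity
    have ht₃ : (0:ℝ) ≤ if 1 ≤ ζ₁ n ω then β₁ * y else 0 := by split_ifs <;> positivity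
    have ht₄ : (0:ℝ) ≤ if 1 ≤ ζ₂ n ω then β₂ * x else 0 := by split_ifs <;> positivity
    have hWv := hW n ω
    have hWp := hWpos n ω
    rw [hg_def]
    rw [abs_div, abs_of_pos hWp, div_le_iff₀ hWp]
    rw [abs_le]
    constructor
    · rw [hWv]; nlinarith [mul_nonneg hA.le ht₁, mul_nonneg hB.le ht₂,
        mul_nonneg hA.le ht₃, mul_nonneg hB.le ht₄]
    · rw [hWv]; nlinarith [mul_nonneg hA.le ht₁, mul_nonneg hB.le ht₂,
        mul_nonneg hA.le ht₃, mul_nonneg hB.le ht₄]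
  have hcast₁ : ∀ n, Measurable[ℱ n] (fun ω => (ζ₁ n ω : ℝ)) :=
    fun n => measurable_from_top.comp (hζ₁meas n)
  have hcast₂ : ∀ n, Measurable[ℱ n] (fun ω => (ζ₂ n ω : ℝ)) :=
    fun n => measurable_from_top.comp (hζ₂meas n)
  have hWmeas : ∀ n, Measurable[ℱ n] (W n) := by
    intro n
    have h1 : MeasurableSet[ℱ n] {ω | 1 ≤ ζ₁ n ω} := (hζ₁meas n) trivial
    have h2 : MeasurableSet[ℱ n] {ω | 1 ≤ ζ₂ n ω} := (hζ₂meas n) trivial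
    have : W n = fun ω =>
        (l₁ + α₁ * (ζ₁ n ω : ℝ)) + (l₂ + α₂ * (ζ₂ n ω : ℝ)) +
        (if 1 ≤ ζ₁ n ω then β₁ * (ζ₂ n ω : ℝ) else 0) +
        (if 1 ≤ ζ₂ n ω then β₂ * (ζ₁ n ω : ℝ) else 0) := funext (hW n)
    rw [this]
    refine Measurable.add (Measurable.add (Measurable.add ?_ ?_) ?_) ?_
    · exact measurable_const.add ((hcast₁ n).const_mul α₁)
    · exact measurable_const.add ((hcast₂ n).const_mul α₂)
    · exact Measurable.ite h1 ((hcast₂ n).const_mul β₁) measurable_const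
    · exact Measurable.ite h2 ((hcast₁ n).const_mul β₂) measurable_const
  have hgmeas : ∀ n, StronglyMeasurable[ℱ n] (g n) := by
    intro n
    have h1 : MeasurableSet[ℱ n] {ω | 1 ≤ ζ₁ n ω} := (hζ₁meas n) trivial
    have h2 : MeasurableSet[ℱ n] {ω | 1 ≤ ζ₂ n ω} := (hζ₂meas n) trivial
    have hnum : Measurable[ℱ n] (fun ω =>
        A * (l₁ + α₁ * (ζ₁ n ω : ℝ)) + B * (l₂ + α₂ * (ζ₂ n ω : ℝ))
        - A * (if 1 ≤ ζ₁ n ω then β₁ * (ζ₂ n ω : ℝ) else 0)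
        - B * (if 1 ≤ ζ₂ n ω then β₂ * (ζ₁ n ω : ℝ) else 0)) := by
      refine Measurable.sub (Measurable.sub (Measurable.add ?_ ?_) ?_) ?_
      · exact (measurable_const.add ((hcast₁ n).const_mul α₁)).const_mul A
      · exact (measurable_const.add ((hcast₂ n).const_mul α₂)).const_mul B
      · exact (Measurable.ite h1 ((hcast₂ n).const_mul β₁) measurable_const).const_mul A
      · exact (Measurable.ite h2 ((hcast₁ n).const_mul β₂) measurable_const).const_mul B
    exact (hnum.div (hWmeas n)).stronglyMeasurable
  have hg_int : ∀ n, Integrable (g n) P := by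
    intro n
    refine Integrable.mono' (integrable_const (A + B))
      ((hgmeas n).mono (ℱ.le n)).aestronglyMeasurable ?_
    exact Eventually.of_forall fun ω => by simpa [Real.norm_eq_abs] using hgb n ω
  -- indicator functions
  set f₁ : ℕ → Ω → ℝ := fun n => (E₁ n).indicator (fun _ => (1 : ℝ)) with hf₁_def
  set f₂ : ℕ → Ω → ℝ := fun n => (E₂ n).indicator (fun _ => (1 : ℝ)) with hf₂_def
  set f₃ : ℕ → Ω → ℝ := fun n => (E₃ n).indicator (fun _ => (1 : ℝ)) with hf₃_def
  set f₄ : ℕ → Ω → ℝ := fun n => (E₄ n).indicator (fun _ => (1 : ℝ)) with hf₄_def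
  have hind_bd : ∀ (s : Set Ω) (ω : Ω), 0 ≤ s.indicator (fun _ => (1:ℝ)) ω ∧
      s.indicator (fun _ => (1:ℝ)) ω ≤ 1 := by
    intro s ω
    by_cases h : ω ∈ s <;> simp [Set.indicator_apply, h]
  have hf₁int : ∀ n, Integrable (f₁ n) P :=
    fun n => (integrable_const 1).indicator (ℱ.le (n+1) _ (hE₁m n))
  have hf₂int : ∀ n, Integrable (f₂ n) P :=
    fun n => (integrable_const 1).indicator (ℱ.le (n+1) _ (hE₂m n))
  have hf₃int : ∀ n, Integrable (f₃ n) P :=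
    fun n => (integrable_const 1).indicator (ℱ.le (n+1) _ (hE₃m n))
  have hf₄int : ∀ n, Integrable (f₄ n) P :=
    fun n => (integrable_const 1).indicator (ℱ.le (n+1) _ (hE₄m n))
  -- the martingale differences
  set d : ℕ → Ω → ℝ :=
    fun n => A • f₁ n + B • f₂ n - A • f₃ n - B • f₄ n - g n with hd_def
  have hd_apply : ∀ n ω, d n ω =
      A * f₁ n ω + B * f₂ n ω - A * f₃ n ω - B * f₄ n ω - g n ω := by
    intro n ω
    simp [hd_def, Pi.add_apply, Pi.sub_apply, Pi.smul_apply, smul_eq_mul]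
  have hdmeas : ∀ n, StronglyMeasurable[ℱ (n + 1)] (d n) := by
    intro n
    have i₁ : StronglyMeasurable[ℱ (n+1)] (f₁ n) :=
      stronglyMeasurable_const.indicator (hE₁m n)
    have i₂ : StronglyMeasurable[ℱ (n+1)] (f₂ n) :=
      stronglyMeasurable_const.indicator (hE₂m n)
    have i₃ : StronglyMeasurable[ℱ (n+1)] (f₃ n) :=
      stronglyMeasurable_const.indicator (hE₃m n)
    have i₄ : StronglyMeasurable[ℱ (n+1)] (f₄ n) :=
      stronglyMeasurable_const.indicator (hE₄m n)
    exact ((((i₁.const_smul A).add (i₂.const_smul B)).sub (i₃.const_smul A)).sub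
      (i₄.const_smul B)).sub ((hgmeas n).mono (ℱ.mono (Nat.le_succ n)))
  have hdbd : ∀ n ω, |d n ω| ≤ 3 * (A + B) := by
    intro n ω
    rw [hd_apply]
    obtain ⟨ha0, ha1⟩ := hind_bd (E₁ n) ω
    obtain ⟨hb0, hb1⟩ := hind_bd (E₂ n) ω
    obtain ⟨hc0, hc1⟩ := hind_bd (E₃ n) ω
    obtain ⟨he0, he1⟩ := hind_bd (E₄ n) ω
    have hg1 := hgb n ω
    rw [abs_le] at hg1 ⊢
    constructor
    · linarith [mul_nonneg hA.le ha0, mul_nonneg hB.le hb0,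
        mul_le_mul_of_nonneg_left hc1 hA.le, mul_le_mul_of_nonneg_left he1 hB.le,
        mul_one A, mul_one B]
    · linarith [mul_nonneg hA.le hc0, mul_nonneg hB.le he0,
        mul_le_mul_of_nonneg_left ha1 hA.le, mul_le_mul_of_nonneg_left hb1 hB.le,
        mul_one A, mul_one B]
  -- conditional expectation of the differences vanishes
  have hdcond : ∀ n, P[d n | ℱ n] =ᵐ[P] 0 := by
    intro n
    have hr₁ : P[f₁ n|ℱ n] =ᵐ[P] fun ω => (l₁ + α₁ * (ζ₁ n ω : ℝ)) / W n ω := hright n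
    have hr₂ : P[f₂ n|ℱ n] =ᵐ[P] fun ω => (l₂ + α₂ * (ζ₂ n ω : ℝ)) / W n ω := hupp n
    have hr₃ : P[f₃ n|ℱ n] =ᵐ[P]
        fun ω => (if 1 ≤ ζ₁ n ω then β₁ * (ζ₂ n ω : ℝ) else 0) / W n ω := hleft n
    have hr₄ : P[f₄ n|ℱ n] =ᵐ[P]
        fun ω => (if 1 ≤ ζ₂ n ω then β₂ * (ζ₁ n ω : ℝ) else 0) / W n ω := hdownp n
    have hAf₁ : Integrable (A • f₁ n) P := (hf₁int n).smul A
    have hBf₂ : Integrable (B • f₂ n) P := (hf₂int n).smul B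
    have hAf₃ : Integrable (A • f₃ n) P := (hf₃int n).smul A
    have hBf₄ : Integrable (B • f₄ n) P := (hf₄int n).smul B
    have hsum : P[A • f₁ n + B • f₂ n - A • f₃ n - B • f₄ n|ℱ n] =ᵐ[P]
        A • P[f₁ n|ℱ n] + B • P[f₂ n|ℱ n] - A • P[f₃ n|ℱ n] - B • P[f₄ n|ℱ n] := by
      refine (condExp_sub ((hAf₁.add hBf₂).sub hAf₃) hBf₄ (ℱ n)).trans ?_
      refine EventuallyEq.sub ?_ (condExp_smul B (f₄ n) (ℱ n))
      refine (condExp_sub (hAf₁.add hBf₂) hAf₃ (ℱ n)).trans ?_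
      refine EventuallyEq.sub ?_ (condExp_smul A (f₃ n) (ℱ n))
      exact (condExp_add hAf₁ hBf₂ (ℱ n)).trans
        ((condExp_smul A (f₁ n) (ℱ n)).add (condExp_smul B (f₂ n) (ℱ n)))
    have hgc : P[g n|ℱ n] = g n :=
      condExp_of_stronglyMeasurable (ℱ.le n) (hgmeas n) (hg_int n)
    have hfull : P[d n|ℱ n] =ᵐ[P]
        A • P[f₁ n|ℱ n] + B • P[f₂ n|ℱ n] - A • P[f₃ n|ℱ n] - B • P[f₄ n|ℱ n]
          - P[g n|ℱ n] := by
      have hdn : d n = (A • f₁ n + B • f₂ n - A • f₃ n - B • f₄ n) - g n := rfl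
      rw [hdn]
      exact (condExp_sub (((hAf₁.add hBf₂).sub hAf₃).sub hBf₄) (hg_int n) (ℱ n)).trans
        (hsum.sub EventuallyEq.rfl)
    refine hfull.trans ?_
    rw [hgc]
    filter_upwards [hr₁, hr₂, hr₃, hr₄] with ω h₁ h₂ h₃ h₄
    simp only [Pi.sub_apply, Pi.add_apply, Pi.smul_apply, smul_eq_mul, Pi.zero_apply]
    rw [h₁, h₂, h₃, h₄]
    simp only [hg_def]
    have hWp : W n ω ≠ 0 := (hWpos n ω).ne'
    field_simp
    ring
  -- apply the martingale strong law
  have hlln := lln_aux P ℱ d (3 * (A + B)) (by positivity) hdmeas hdbd hdcond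
  have hstep_ae : ∀ᵐ ω ∂P, ∀ n,
      (ζ₁ (n + 1) ω = ζ₁ n ω + 1 ∧ ζ₂ (n + 1) ω = ζ₂ n ω) ∨
      (ζ₁ (n + 1) ω = ζ₁ n ω ∧ ζ₂ (n + 1) ω = ζ₂ n ω + 1) ∨
      (ζ₁ (n + 1) ω + 1 = ζ₁ n ω ∧ ζ₂ (n + 1) ω = ζ₂ n ω) ∨
      (ζ₁ (n + 1) ω = ζ₁ n ω ∧ ζ₂ (n + 1) ω + 1 = ζ₂ n ω) := ae_all_iff.mpr hstep
  filter_upwards [hlln, hstep_ae] with ω hln hst hsurv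
  -- pointwise analysis on the survival event
  have hone : ∀ k, 1 ≤ ζ₁ k ω ∧ 1 ≤ ζ₂ k ω := fun k =>
    ⟨Nat.one_le_iff_ne_zero.mpr (hsurv k).1, Nat.one_le_iff_ne_zero.mpr (hsurv k).2⟩
  have hWval : ∀ k, W k ω = (l₁ + α₁ * (ζ₁ k ω : ℝ)) + (l₂ + α₂ * (ζ₂ k ω : ℝ))
      + β₁ * (ζ₂ k ω : ℝ) + β₂ * (ζ₁ k ω : ℝ) := by
    intro k
    rw [hW, if_pos (hone k).1, if_pos (hone k).2]
  have hgval : ∀ k, g k ω = ρ + c / W k ω := by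
    intro k
    have hWp : W k ω ≠ 0 := (hWpos k ω).ne'
    have hnum : A * (l₁ + α₁ * (ζ₁ k ω : ℝ)) + B * (l₂ + α₂ * (ζ₂ k ω : ℝ))
        - A * (if 1 ≤ ζ₁ k ω then β₁ * (ζ₂ k ω : ℝ) else 0)
        - B * (if 1 ≤ ζ₂ k ω then β₂ * (ζ₁ k ω : ℝ) else 0)
        = ρ * W k ω + c := by
      rw [if_pos (hone k).1, if_pos (hone k).2, hWval k]
      simp only [hA_def, hB_def, hρ_def, hc_def]
      ring
    simp only [hg_def]
    rw [hnum]
    field_simp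
  have hdval : ∀ k, d k ω = (S (k + 1) ω - S k ω) - (ρ + c / W k ω) := by
    intro k
    have hind : A * f₁ k ω + B * f₂ k ω - A * f₃ k ω - B * f₄ k ω
        = S (k + 1) ω - S k ω := by
      rcases hst k with ⟨h1, h2⟩ | ⟨h1, h2⟩ | ⟨h1, h2⟩ | ⟨h1, h2⟩
      · have m1 : ω ∈ E₁ k := ⟨h1, h2⟩
        have m2 : ω ∉ E₂ k := fun h => by obtain ⟨a, b⟩ := h; omega
        have m3 : ω ∉ E₃ k := fun h => by obtain ⟨a, b⟩ := h; omega
        have m4 : ω ∉ E₄ k := fun h => by obtain ⟨a, b⟩ := h; omega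
        simp only [hf₁_def, hf₂_def, hf₃_def, hf₄_def, Set.indicator_of_mem m1,
          Set.indicator_of_notMem m2, Set.indicator_of_notMem m3,
          Set.indicator_of_notMem m4]
        rw [hS, hS, h1, h2]
        push_cast
        ring
      · have m1 : ω ∉ E₁ k := fun h => by obtain ⟨a, b⟩ := h; omega
        have m2 : ω ∈ E₂ k := ⟨h1, h2⟩
        have m3 : ω ∉ E₃ k := fun h => by obtain ⟨a, b⟩ := h; omega
        have m4 : ω ∉ E₄ k := fun h => by obtain ⟨a, b⟩ := h; omega
        simp only [hf₁_def, hf₂_def, hf₃_def, hf₄_def, Set.indicator_of_mem m2,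
          Set.indicator_of_notMem m1, Set.indicator_of_notMem m3,
          Set.indicator_of_notMem m4]
        rw [hS, hS, h1, h2]
        push_cast
        ring
      · have m1 : ω ∉ E₁ k := fun h => by obtain ⟨a, b⟩ := h; omega
        have m2 : ω ∉ E₂ k := fun h => by obtain ⟨a, b⟩ := h; omega
        have m3 : ω ∈ E₃ k := ⟨h1, h2⟩
        have m4 : ω ∉ E₄ k := fun h => by obtain ⟨a, b⟩ := h; omega
        simp only [hf₁_def, hf₂_def, hf₃_def, hf₄_def, Set.indicator_of_mem m3,
          Set.indicator_of_notMem m1, Set.indicator_of_notMem m2,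
          Set.indicator_of_notMem m4]
        rw [hS, hS, h2, ← h1]
        push_cast
        ring
      · have m1 : ω ∉ E₁ k := fun h => by obtain ⟨a, b⟩ := h; omega
        have m2 : ω ∉ E₂ k := fun h => by obtain ⟨a, b⟩ := h; omega
        have m3 : ω ∉ E₃ k := fun h => by obtain ⟨a, b⟩ := h; omega
        have m4 : ω ∈ E₄ k := ⟨h1, h2⟩
        simp only [hf₁_def, hf₂_def, hf₃_def, hf₄_def, Set.indicator_of_mem m4,
          Set.indicator_of_notMem m1, Set.indicator_of_notMem m2,
          Set.indicator_of_notMem m3]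
        rw [hS, hS, h1, ← h2]
        push_cast
        ring
    rw [hd_apply, hind, hgval k]
  -- sum identity
  have hsumid : ∀ n, ∑ k ∈ range n, d k ω
      = S n ω - S 0 ω - ρ * n - c * ∑ k ∈ range n, (W k ω)⁻¹ := by
    intro n
    rw [Finset.sum_congr rfl (fun k _ => hdval k), Finset.sum_sub_distrib,
      Finset.sum_range_sub (fun k => S k ω), Finset.sum_add_distrib,
      Finset.sum_const, Finset.card_range]
    have : ∑ k ∈ range n, c / W k ω = c * ∑ k ∈ range n, (W k ω)⁻¹ := by
      rw [Finset.mul_sum]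
      exact Finset.sum_congr rfl fun k _ => div_eq_mul_inv c (W k ω)
    rw [this, nsmul_eq_mul]
    ring
  have hM : Tendsto
      (fun n : ℕ => (S n ω - S 0 ω - ρ * n - c * ∑ k ∈ range n, (W k ω)⁻¹) / (n : ℝ))
      atTop (𝓝 0) := by
    refine hln.congr fun n => ?_
    rw [hsumid n]
  have hu_nonneg : ∀ n : ℕ, 0 ≤ ∑ k ∈ range n, (W k ω)⁻¹ :=
    fun n => Finset.sum_nonneg fun k _ => (inv_pos.mpr (hWpos k ω)).le
  have hS0 : 0 ≤ S 0 ω := by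
    rw [hS]
    positivity
  -- S tends to infinity
  have hStend : Tendsto (fun n => S n ω) atTop atTop := by
    refine tendsto_atTop_mono' atTop ?_
      ((tendsto_natCast_atTop_atTop (R := ℝ)).const_mul_atTop (half_pos hρ))
    have hev : ∀ᶠ n : ℕ in atTop,
        -(ρ / 2) < (S n ω - S 0 ω - ρ * n - c * ∑ k ∈ range n, (W k ω)⁻¹) / (n : ℝ) :=
      hM.eventually (eventually_gt_nhds (by linarith))
    filter_upwards [hev, eventually_ge_atTop 1] with n hgt hn1
    have hnp : (0:ℝ) < n := by
      have : (1:ℝ) ≤ (n:ℝ) := by exact_mod_cast hn1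
      linarith
    rw [lt_div_iff₀ hnp] at hgt
    have hcu : 0 ≤ c * ∑ k ∈ range n, (W k ω)⁻¹ :=
      mul_nonneg hc.le (hu_nonneg n)
    nlinarith
  -- W tends to infinity
  have hWtend : Tendsto (fun n => W n ω) atTop atTop := by
    set m : ℝ := min (α₁ + β₂) (α₂ + β₁) with hm_def
    have hm : 0 < m := lt_min (by linarith) (by linarith)
    have hineq : ∀ k : ℕ, m / (A + B) * S k ω ≤ W k ω := by
      intro k
      have hABpos : (0:ℝ) < A + B := by linarith
      rw [div_mul_eq_mul_div, div_le_iff₀ hABpos]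
      have hx0 : (0:ℝ) ≤ (ζ₁ k ω : ℝ) := Nat.cast_nonneg _
      have hy0 : (0:ℝ) ≤ (ζ₂ k ω : ℝ) := Nat.cast_nonneg _
      have hm1 : m ≤ α₁ + β₂ := min_le_left _ _
      have hm2 : m ≤ α₂ + β₁ := min_le_right _ _
      rw [hWval k, hS]
      nlinarith [mul_nonneg (mul_nonneg hB.le hm.le) hx0,
        mul_nonneg (mul_nonneg hA.le hm.le) hy0,
        mul_le_mul_of_nonneg_right (mul_le_mul_of_nonneg_left hm1 hABpos.le) hx0,
        mul_le_mul_of_nonneg_right (mul_le_mul_of_nonneg_left hm2 hABpos.le) hy0,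
        mul_nonneg (show (0:ℝ) ≤ l₁ + l₂ by linarith) hABpos.le]
    exact tendsto_atTop_mono hineq
      (hStend.const_mul_atTop (by positivity : (0:ℝ) < m / (A + B)))
  have hinv : Tendsto (fun k => (W k ω)⁻¹) atTop (𝓝 0) := hWtend.inv_tendsto_atTop
  have hces : Tendsto (fun n : ℕ => (n : ℝ)⁻¹ * ∑ k ∈ range n, (W k ω)⁻¹)
      atTop (𝓝 0) := by
    have := hinv.cesaro
    simpa [smul_eq_mul] using this
  -- assemble the final limit
  have hfinal : Tendsto
      (fun n : ℕ => (S n ω - S 0 ω - ρ * n - c * ∑ k ∈ range n, (W k ω)⁻¹) / (n : ℝ)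
        + S 0 ω / (n : ℝ) + ρ + c * ((n : ℝ)⁻¹ * ∑ k ∈ range n, (W k ω)⁻¹))
      atTop (𝓝 (0 + 0 + ρ + c * 0)) :=
    ((hM.add (tendsto_const_div_atTop_nhds_zero_nat (S 0 ω))).add
      tendsto_const_nhds).add (hces.const_mul c)
  have : (0:ℝ) + 0 + ρ + c * 0 = ρ := by ring
  rw [this] at hfinal
  have hgoal : Tendsto (fun n : ℕ => S n ω / (n : ℝ)) atTop (𝓝 ρ) := by
    refine hfinal.congr' ?_
    filter_upwards [eventually_ge_atTop 1] with n hn1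
    have hnp : (n:ℝ) ≠ 0 := by
      have : (1:ℝ) ≤ (n:ℝ) := by exact_mod_cast hn1
      linarith
    field_simp
    ring
  exact hgoal
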